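/- arXiv:2206.05133 — 4 statements merged into one kernel-verified Lean document; each statement's English description precedes it below -/
import Mathlib

section
/- For all ρ, σ ∈ (0,1) and all φ_K, φ_L ∈ ℝ, the flux expression ρ(1-σ)e^{(φ_K-φ_L)/2} - σ(1-ρ)e^{(φ_L-φ_K)/2} equals 2√(η(ρ)η(σ)) · sinh((ξ_K - ξ_L)/2), where ξ_K = log(ρ/(1-ρ)) + φ_K and ξ_L = log(σ/(1-σ)) + φ_L. -/
theorem stmt_3 (ρ σ φK φL : ℝ) (hρ : ρ ∈ Set.Ioo (0:ℝ) 1) (hσ : σ ∈ Set.Ioo (0:ℝ) 1) :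
    ρ * (1 - σ) * Real.exp ((φK - φL) / 2) - σ * (1 - ρ) * Real.exp ((φL - φK) / 2) =
      2 * Real.sqrt ((ρ * (1 - ρ)) * (σ * (1 - σ))) *
        Real.sinh (((Real.log (ρ / (1 - ρ)) + φK) - (Real.log (σ / (1 - σ)) + φL)) / 2) := by
  obtain ⟨hρ0, hρ1⟩ := hρ
  obtain ⟨hσ0, hσ1⟩ := hσ
  have h1ρ : (0:ℝ) < 1 - ρ := by linarith
  have h1σ : (0:ℝ) < 1 - σ := by linarith
  have hexp : ∀ x : ℝ, 0 < x → Real.exp (Real.log x / 2) = Real.sqrt x := by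
    intro x hx
    rw [Real.sqrt_eq_rpow, Real.rpow_def_of_pos hx]
    ring_nf
  have hlogρ : Real.log (ρ / (1 - ρ)) = Real.log ρ - Real.log (1 - ρ) :=
    Real.log_div (ne_of_gt hρ0) (ne_of_gt h1ρ)
  have hlogσ : Real.log (σ / (1 - σ)) = Real.log σ - Real.log (1 - σ) :=
    Real.log_div (ne_of_gt hσ0) (ne_of_gt h1σ)
  have hsq : Real.sqrt ((ρ * (1 - ρ)) * (σ * (1 - σ))) =
      Real.sqrt ρ * Real.sqrt (1 - ρ) * (Real.sqrt σ * Real.sqrt (1 - σ)) := by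
    rw [Real.sqrt_mul (by positivity), Real.sqrt_mul hρ0.le, Real.sqrt_mul hσ0.le]
  rw [Real.sinh_eq, hsq, hlogρ, hlogσ]
  have e1 : (Real.log ρ - Real.log (1 - ρ) + φK - (Real.log σ - Real.log (1 - σ) + φL)) / 2
      = Real.log ρ / 2 + Real.log (1 - σ) / 2 + (φK - φL) / 2
        - (Real.log σ / 2 + Real.log (1 - ρ) / 2) := by ring
  rw [e1]
  rw [Real.exp_sub, Real.exp_add, Real.exp_add, Real.exp_add,
    show -(Real.log ρ / 2 + Real.log (1 - σ) / 2 + (φK - φL) / 2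
        - (Real.log σ / 2 + Real.log (1 - ρ) / 2))
      = Real.log σ / 2 + Real.log (1 - ρ) / 2 + (φL - φK) / 2
        - (Real.log ρ / 2 + Real.log (1 - σ) / 2) by ring,
    Real.exp_sub, Real.exp_add, Real.exp_add, Real.exp_add,
    hexp ρ hρ0, hexp σ hσ0, hexp _ h1ρ, hexp _ h1σ]
  have hρ' : Real.sqrt ρ ^ 2 = ρ := Real.sq_sqrt hρ0.le
  have hσ' : Real.sqrt σ ^ 2 = σ := Real.sq_sqrt hσ0.le
  have h1ρ' : Real.sqrt (1 - ρ) ^ 2 = 1 - ρ := Real.sq_sqrt h1ρ.le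
  have h1σ' : Real.sqrt (1 - σ) ^ 2 = 1 - σ := Real.sq_sqrt h1σ.le
  have pρ : (0:ℝ) < Real.sqrt ρ := Real.sqrt_pos.mpr hρ0
  have pσ : (0:ℝ) < Real.sqrt σ := Real.sqrt_pos.mpr hσ0
  have p1ρ : (0:ℝ) < Real.sqrt (1 - ρ) := Real.sqrt_pos.mpr h1ρ
  have p1σ : (0:ℝ) < Real.sqrt (1 - σ) := Real.sqrt_pos.mpr h1σ
  set a := Real.sqrt ρ
  set b := Real.sqrt (1 - ρ)
  set c := Real.sqrt σ
  set d := Real.sqrt (1 - σ)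
  rw [show ρ * (1 - σ) = a ^ 2 * d ^ 2 by rw [hρ', h1σ'],
    show σ * (1 - ρ) = c ^ 2 * b ^ 2 by rw [hσ', h1ρ']]
  field_simp
end

section
/- Let Ψ(z) = 2z·arsinh(z/2) - 2√(z²+4) + 4 and Ψ*(s) = 4(cosh(s/2) - 1). Then Ψ* is the Legendre transform of Ψ: for all s ∈ ℝ, Ψ*(s) = sup over z ∈ ℝ of (s·z - Ψ(z)). -/
noncomputable def Ψ (z : ℝ) : ℝ :=
  2 * z * Real.arsinh (z / 2) - 2 * Real.sqrt (z^2 + 4) + 4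

noncomputable def Ψstar (s : ℝ) : ℝ := 4 * (Real.cosh (s / 2) - 1)

lemma sqrt_aux (t : ℝ) : Real.sqrt ((2 * Real.sinh t)^2 + 4) = 2 * Real.cosh t := by
  rw [show (2 * Real.sinh t)^2 + 4 = (2 * Real.cosh t)^2 by nlinarith [Real.cosh_sq t]]
  exact Real.sqrt_sq (by positivity)

lemma key_aux (s t : ℝ) : s * (2 * Real.sinh t) - Ψ (2 * Real.sinh t) ≤ Ψstar s := by
  have harsinh : Real.arsinh (2 * Real.sinh t / 2) = t := by
    rw [show 2 * Real.sinh t / 2 = Real.sinh t by ring, Real.arsinh_sinh]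
  set x := s / 2 - t with hx
  have hcosh : Real.cosh (s / 2) = Real.cosh t * Real.cosh x + Real.sinh t * Real.sinh x := by
    rw [show s / 2 = t + x by ring, Real.cosh_add]
  have h1 : 0 ≤ Real.cosh t - Real.sinh t := by
    rw [Real.cosh_sub_sinh]; positivity
  have h2 : 0 ≤ Real.cosh t + Real.sinh t := by
    rw [Real.cosh_add_sinh]; positivity
  have h3 : 0 ≤ Real.cosh x - 1 - (Real.sinh x - x) := by
    have := Real.add_one_le_exp (-x)
    have h := Real.cosh_sub_sinh x
    linarith
  have h4 : 0 ≤ Real.cosh x - 1 + (Real.sinh x - x) := by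
    have := Real.add_one_le_exp x
    have h := Real.cosh_add_sinh x
    linarith
  have key : 0 ≤ Real.cosh t * (Real.cosh x - 1) + Real.sinh t * (Real.sinh x - x) := by
    nlinarith [mul_nonneg h1 h3, mul_nonneg h2 h4]
  simp only [Ψ, Ψstar, harsinh, sqrt_aux]
  have hs : s = 2 * (t + x) := by rw [hx]; ring
  rw [hcosh]
  nlinarith [key]

theorem stmt_6 (s : ℝ) :
    IsLUB (Set.range fun z : ℝ => s * z - Ψ z) (Ψstar s) := by
  apply IsGreatest.isLUB
  constructor
  · refine ⟨2 * Real.sinh (s / 2), ?_⟩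
    have harsinh : Real.arsinh (2 * Real.sinh (s/2) / 2) = s/2 := by
      rw [show 2 * Real.sinh (s/2) / 2 = Real.sinh (s/2) by ring, Real.arsinh_sinh]
    simp only [Ψ, Ψstar, harsinh, sqrt_aux]
    ring
  · rintro _ ⟨z, rfl⟩
    have hz : z = 2 * Real.sinh (Real.arsinh (z / 2)) := by
      rw [Real.sinh_arsinh]; ring
    calc s * z - Ψ z
        = s * (2 * Real.sinh (Real.arsinh (z/2))) - Ψ (2 * Real.sinh (Real.arsinh (z/2))) := by
          rw [← hz]
      _ ≤ Ψstar s := key_aux s _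
end

section
/- With Ψ(z) = 2z·arsinh(z/2) - 2√(z²+4) + 4 and Ψ*(s) = 4(cosh(s/2) - 1), the Young–Fenchel inequality z·s ≤ Ψ(z) + Ψ*(s) holds for all z, s ∈ ℝ, with equality if and only if z = 2 sinh(s/2). -/
lemma cosh_convex (u t : ℝ) : Real.sinh u * (t - u) ≤ Real.cosh t - Real.cosh u := by
  have h1 := mul_le_mul_of_nonneg_left (Real.add_one_le_exp (t - u)) (Real.exp_pos u).le
  have h2 := mul_le_mul_of_nonneg_left (Real.add_one_le_exp (u - t)) (Real.exp_pos (-u)).le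
  rw [← Real.exp_add] at h1 h2
  have e1 : u + (t - u) = t := by ring
  have e2 : -u + (u - t) = -t := by ring
  rw [e1] at h1; rw [e2] at h2
  rw [Real.cosh_eq, Real.cosh_eq, Real.sinh_eq]
  nlinarith

lemma cosh_strict (u t : ℝ) (h : u ≠ t) : Real.sinh u * (t - u) < Real.cosh t - Real.cosh u := by
  have h1 := mul_lt_mul_of_pos_left (Real.add_one_lt_exp (sub_ne_zero.2 (Ne.symm h))) (Real.exp_pos u)
  have h2 := mul_le_mul_of_nonneg_left (Real.add_one_le_exp (u - t)) (Real.exp_pos (-u)).le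
  rw [← Real.exp_add] at h1 h2
  have e1 : u + (t - u) = t := by ring
  have e2 : -u + (u - t) = -t := by ring
  rw [e1] at h1; rw [e2] at h2
  rw [Real.cosh_eq, Real.cosh_eq, Real.sinh_eq]
  nlinarith

theorem stmt_7 (z s : ℝ) :
    z * s ≤ Ψ z + Ψstar s ∧ (z * s = Ψ z + Ψstar s ↔ z = 2 * Real.sinh (s / 2)) := by
  set u := Real.arsinh (z / 2) with hu
  have hz : z = 2 * Real.sinh u := by rw [hu, Real.sinh_arsinh]; ring
  have hsq : Real.sqrt (z ^ 2 + 4) = 2 * Real.cosh u := by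
    rw [hu, Real.cosh_arsinh]
    rw [show z ^ 2 + 4 = 4 * (1 + (z / 2) ^ 2) by ring, Real.sqrt_mul (by norm_num : (4:ℝ) ≥ 0),
      show (4:ℝ) = 2 ^ 2 by norm_num, Real.sqrt_sq (by norm_num : (0:ℝ) ≤ 2)]
  have key : Ψ z + Ψstar s - z * s
      = 4 * ((Real.cosh (s / 2) - Real.cosh u) - Real.sinh u * (s / 2 - u)) := by
    rw [Ψ, Ψstar, hsq, ← hu, hz]
    ring
  constructor
  · have := cosh_convex u (s / 2)
    linarith [key]
  · constructor
    · intro heq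
      have hut : u = s / 2 := by
        by_contra hne
        have := cosh_strict u (s / 2) hne
        have : Ψ z + Ψstar s - z * s > 0 := by linarith [key]
        linarith
      rw [hz, hut]
    · intro heq
      have hut : u = s / 2 := by
        apply Real.sinh_injective
        have : 2 * Real.sinh u = 2 * Real.sinh (s / 2) := by rw [← hz, heq]
        linarith
      have : Ψ z + Ψstar s - z * s = 0 := by rw [key, hut]; ring
      linarith
end

section
/- For α > β > 0 and ρ ∈ (0,1), with ξ = log(ρ/(1-ρ)) + φ and ξ^Γ = φ - log(α/β - 1) for φ ∈ ℝ, one has αρ - β = 2√(β(α-β)ρ(1-ρ)) · sinh((ξ - ξ^Γ)/2). In particular (αρ - β)(ξ - ξ^Γ) ≥ 0. -/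
theorem stmt_10 (α β ρ φ : ℝ) (hβ : 0 < β) (hαβ : β < α) (hρ : ρ ∈ Set.Ioo (0:ℝ) 1) :
    (α * ρ - β =
      2 * Real.sqrt (β * (α - β) * (ρ * (1 - ρ))) *
        Real.sinh (((Real.log (ρ / (1 - ρ)) + φ) - (φ - Real.log (α / β - 1))) / 2)) ∧
    0 ≤ (α * ρ - β) * ((Real.log (ρ / (1 - ρ)) + φ) - (φ - Real.log (α / β - 1))) := by
  obtain ⟨hρ0, hρ1⟩ := hρ
  have h1ρ : 0 < 1 - ρ := by linarith
  have hαβ' : 0 < α - β := by linarith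
  have ht1 : 0 < ρ / (1 - ρ) := div_pos hρ0 h1ρ
  have ht2 : 0 < α / β - 1 := by
    have : 1 < α / β := (one_lt_div hβ).mpr hαβ
    linarith
  set t : ℝ := ρ / (1 - ρ) * (α / β - 1) with htdef
  have htpos : 0 < t := mul_pos ht1 ht2
  have harg : (Real.log (ρ / (1 - ρ)) + φ) - (φ - Real.log (α / β - 1)) = Real.log t := by
    rw [htdef, Real.log_mul (ne_of_gt ht1) (ne_of_gt ht2)]; ring
  have hA : 0 ≤ β * (α - β) * (ρ * (1 - ρ)) := by positivity
  have hst : 0 < Real.sqrt t := Real.sqrt_pos.mpr htpos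
  have hhalf : Real.log t / 2 = Real.log (Real.sqrt t) := (Real.log_sqrt htpos.le).symm
  have hsinh : Real.sinh (Real.log t / 2) = (Real.sqrt t - (Real.sqrt t)⁻¹) / 2 := by
    rw [hhalf, Real.sinh_log hst]
  have hmul1 : Real.sqrt (β * (α - β) * (ρ * (1 - ρ))) * Real.sqrt t = (α - β) * ρ := by
    rw [← Real.sqrt_mul hA]
    have : β * (α - β) * (ρ * (1 - ρ)) * t = ((α - β) * ρ) ^ 2 := by
      rw [htdef]; field_simp
    rw [this, Real.sqrt_sq (by positivity)]
  have hmul2 : Real.sqrt (β * (α - β) * (ρ * (1 - ρ))) * (Real.sqrt t)⁻¹ = β * (1 - ρ) := by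
    rw [← Real.sqrt_inv, ← Real.sqrt_mul hA]
    have : β * (α - β) * (ρ * (1 - ρ)) * t⁻¹ = (β * (1 - ρ)) ^ 2 := by
      rw [htdef]; field_simp
    rw [this, Real.sqrt_sq (by positivity)]
  have hmain : α * ρ - β =
      2 * Real.sqrt (β * (α - β) * (ρ * (1 - ρ))) *
        Real.sinh (((Real.log (ρ / (1 - ρ)) + φ) - (φ - Real.log (α / β - 1))) / 2) := by
    rw [harg, hsinh]
    have : 2 * Real.sqrt (β * (α - β) * (ρ * (1 - ρ))) *
        ((Real.sqrt t - (Real.sqrt t)⁻¹) / 2) =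
        Real.sqrt (β * (α - β) * (ρ * (1 - ρ))) * Real.sqrt t -
        Real.sqrt (β * (α - β) * (ρ * (1 - ρ))) * (Real.sqrt t)⁻¹ := by ring
    rw [this, hmul1, hmul2]; ring
  refine ⟨hmain, ?_⟩
  rw [hmain, harg]
  rcases le_or_gt 0 (Real.log t) with h | h
  · exact mul_nonneg (by positivity) h
  · have hs : Real.sinh (Real.log t / 2) ≤ 0 := by
      rw [← Real.sinh_zero]
      exact Real.sinh_le_sinh.mpr (by linarith)
    have : 2 * Real.sqrt (β * (α - β) * (ρ * (1 - ρ))) * Real.sinh (Real.log t / 2) ≤ 0 :=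
      mul_nonpos_of_nonneg_of_nonpos (by positivity) hs
    nlinarith [this, h.le]
end
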